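/- Every strongly self-contracted curve γ : I → ℝ^n is strictly self-contracted: for all t₁ < t₂ < t₃ in I, ‖γ(t₁) − γ(t₃)‖ > ‖γ(t₂) − γ(t₃)‖. -/

import Mathlib

open Set Metric Filter Topology RealInnerProductSpace

/-- The normal cone of a convex set `K` at a point `u₀`. -/
def normalCone {n : ℕ} (K : Set (EuclideanSpace ℝ (Fin n))) (u₀ : EuclideanSpace ℝ (Fin n)) :
    Set (EuclideanSpace ℝ (Fin n)) :=
  {v | ∀ u ∈ K, ⟪v, u - u₀⟫ ≤ 0}

/-- The set `sec⁻(τ)` of limits of backward unit secant vectors of the curve `γ` at `τ`. -/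
def secMinus {n : ℕ} (I : Set ℝ) (γ : ℝ → EuclideanSpace ℝ (Fin n)) (τ : ℝ) :
    Set (EuclideanSpace ℝ (Fin n)) :=
  {q | ‖q‖ = 1 ∧ ∃ t : ℕ → ℝ, (∀ k, t k ∈ I) ∧ (∀ k, t k < τ) ∧
    Tendsto t atTop (nhds τ) ∧
    Tendsto (fun k => ‖γ (t k) - γ τ‖⁻¹ • (γ (t k) - γ τ)) atTop (nhds q)}

/-- A curve `γ : I → ℝⁿ` is *strongly self-contracted* if it is continuous, injective, and
for every `τ ∈ I`, `sec⁻(τ)` is contained in the interior of the normal cone at `γ τ` of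
the convex hull `Ω(τ)` of the tail `{γ t : t ∈ I, t ≥ τ}`. -/
def StronglySelfContracted {n : ℕ} (I : Set ℝ) (γ : ℝ → EuclideanSpace ℝ (Fin n)) : Prop :=
  ContinuousOn γ I ∧ InjOn γ I ∧
  ∀ τ ∈ I, secMinus I γ τ ⊆
    interior (normalCone (convexHull ℝ (γ '' (I ∩ Ici τ))) (γ τ))

lemma inner_lt_zero_of_mem_interior_normalCone {n : ℕ}
    {K : Set (EuclideanSpace ℝ (Fin n))} {u₀ v u : EuclideanSpace ℝ (Fin n)}
    (hv : v ∈ interior (normalCone K u₀)) (hu : u ∈ K) (hne : u ≠ u₀) :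
    ⟪v, u - u₀⟫ < 0 := by
  obtain ⟨ε, hε, hball⟩ := Metric.isOpen_iff.mp isOpen_interior v hv
  have hd : (0:ℝ) < ‖u - u₀‖ := norm_pos_iff.mpr (sub_ne_zero.mpr hne)
  set c : ℝ := ε / (2 * ‖u - u₀‖) with hc
  have hcpos : 0 < c := div_pos hε (by positivity)
  have hw : v + c • (u - u₀) ∈ normalCone K u₀ := by
    apply interior_subset (hball ?_)
    rw [mem_ball, dist_eq_norm]
    have : v + c • (u - u₀) - v = c • (u - u₀) := by abel
    rw [this, norm_smul, Real.norm_eq_abs, abs_of_pos hcpos, hc]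
    rw [div_mul_eq_mul_div, mul_comm 2 ‖u - u₀‖, ← div_div, mul_div_assoc]
    rw [div_self (ne_of_gt hd), mul_one]
    linarith
  have h0 := hw u hu
  rw [inner_add_left, real_inner_smul_left, real_inner_self_eq_norm_sq] at h0
  have hpos : 0 < c * ‖u - u₀‖ ^ 2 := mul_pos hcpos (pow_pos hd 2)
  linarith

/-- Pointwise key lemma: just to the left of `τ`, the distance to `γ t₃` is strictly larger. -/
lemma local_left_increase {n : ℕ} {I : Set ℝ} {γ : ℝ → EuclideanSpace ℝ (Fin n)}
    (hγ : StronglySelfContracted I γ) {τ t₃ : ℝ} (hτ : τ ∈ I) (ht₃ : t₃ ∈ I) (hlt : τ < t₃) :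
    ∃ δ > 0, ∀ t ∈ I, τ - δ < t → t < τ → ‖γ τ - γ t₃‖ < ‖γ t - γ t₃‖ := by
  by_contra hcon
  push_neg at hcon
  have hseq : ∀ k : ℕ, ∃ t, t ∈ I ∧ (τ - 1/(k+1) < t ∧ t < τ) ∧
      ‖γ t - γ t₃‖ ≤ ‖γ τ - γ t₃‖ := by
    intro k
    obtain ⟨t, htI, h1, h2, h3⟩ := hcon (1/(k+1)) (by positivity)
    exact ⟨t, htI, ⟨h1, h2⟩, h3⟩
  choose t htI htmem hle using hseq
  have htlt : ∀ k, t k < τ := fun k => (htmem k).2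
  -- the secant vectors
  have hne : ∀ k, γ (t k) - γ τ ≠ 0 := fun k =>
    sub_ne_zero.mpr (fun h => absurd (hγ.2.1 (htI k) hτ h) (ne_of_lt (htlt k)))
  set q : ℕ → EuclideanSpace ℝ (Fin n) :=
    fun k => ‖γ (t k) - γ τ‖⁻¹ • (γ (t k) - γ τ) with hq
  have hqs : ∀ k, q k ∈ sphere (0 : EuclideanSpace ℝ (Fin n)) 1 := by
    intro k
    rw [mem_sphere_zero_iff_norm, hq, norm_smul, norm_inv, norm_norm,
      inv_mul_cancel₀ (norm_ne_zero_iff.mpr (hne k))]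
  obtain ⟨q₀, hq₀s, φ, hφ, hφt⟩ :=
    (isCompact_sphere (0 : EuclideanSpace ℝ (Fin n)) 1).tendsto_subseq hqs
  have httend : Tendsto t atTop (𝓝 τ) := by
    apply tendsto_of_tendsto_of_tendsto_of_le_of_le (g := fun k : ℕ => τ - 1/(k+1))
      (h := fun _ : ℕ => τ)
    · have : Tendsto (fun k : ℕ => 1 / ((k : ℝ) + 1)) atTop (𝓝 0) :=
        tendsto_one_div_add_atTop_nhds_zero_nat
      have h2 : Tendsto (fun k : ℕ => τ - 1/(k+1)) atTop (𝓝 (τ - 0)) :=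
        tendsto_const_nhds.sub this
      simpa using h2
    · exact tendsto_const_nhds
    · exact fun k => le_of_lt (htmem k).1
    · exact fun k => le_of_lt (htlt k)
  have hq₀ : q₀ ∈ secMinus I γ τ := by
    refine ⟨mem_sphere_zero_iff_norm.mp hq₀s, t ∘ φ, fun k => htI _, fun k => htlt _,
      httend.comp hφ.tendsto_atTop, hφt⟩
  have hq₀N := hγ.2.2 τ hτ hq₀
  have ht₃mem : γ t₃ ∈ convexHull ℝ (γ '' (I ∩ Ici τ)) :=
    subset_convexHull ℝ _ ⟨t₃, ⟨ht₃, le_of_lt hlt⟩, rfl⟩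
  have ht₃ne : γ t₃ ≠ γ τ := fun h => absurd (hγ.2.1 ht₃ hτ h) (ne_of_gt hlt)
  have hinner : ⟪q₀, γ t₃ - γ τ⟫ < 0 :=
    inner_lt_zero_of_mem_interior_normalCone hq₀N ht₃mem ht₃ne
  have htend2 : Tendsto (fun k => ⟪(q ∘ φ) k, γ t₃ - γ τ⟫) atTop (𝓝 ⟪q₀, γ t₃ - γ τ⟫) :=
    hφt.inner tendsto_const_nhds
  obtain ⟨k, hk⟩ := (htend2.eventually_lt_const hinner).exists
  -- now derive the contradiction at index φ k
  set s := t (φ k) with hs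
  have hsinner : ⟪γ s - γ τ, γ t₃ - γ τ⟫ < 0 := by
    have hnorm : (0:ℝ) < ‖γ s - γ τ‖ := norm_pos_iff.mpr (hne (φ k))
    have : ⟪(q ∘ φ) k, γ t₃ - γ τ⟫ = ‖γ s - γ τ‖⁻¹ * ⟪γ s - γ τ, γ t₃ - γ τ⟫ := by
      simp only [Function.comp, hq, real_inner_smul_left, hs]
    rw [this] at hk
    nlinarith [inv_pos.mpr hnorm]
  have hkey : ‖γ τ - γ t₃‖ < ‖γ s - γ t₃‖ := by
    have hsq : ‖γ τ - γ t₃‖ ^ 2 < ‖γ s - γ t₃‖ ^ 2 := by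
      have h1 : γ s - γ t₃ = (γ s - γ τ) - (γ t₃ - γ τ) := by abel
      have h2 : ‖(γ s - γ τ) - (γ t₃ - γ τ)‖ ^ 2 =
          ‖γ s - γ τ‖ ^ 2 - 2 * ⟪γ s - γ τ, γ t₃ - γ τ⟫ + ‖γ t₃ - γ τ‖ ^ 2 :=
        norm_sub_sq_real _ _
      have h3 : ‖γ τ - γ t₃‖ = ‖γ t₃ - γ τ‖ := norm_sub_rev _ _
      rw [h1, h2, h3]
      nlinarith [sq_nonneg ‖γ s - γ τ‖]
    exact lt_of_pow_lt_pow_left₀ 2 (norm_nonneg _) hsq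
  exact absurd (hle (φ k)) (not_le.mpr hkey)

/-- Every strongly self-contracted curve is strictly self-contracted: for `t₁ < t₂ < t₃`
in `I`, `‖γ t₁ - γ t₃‖ > ‖γ t₂ - γ t₃‖`. -/
theorem stronglySelfContracted_strictly {n : ℕ} (I : Set ℝ) (hI : I.OrdConnected)
    (γ : ℝ → EuclideanSpace ℝ (Fin n)) (hγ : StronglySelfContracted I γ) :
    ∀ t₁ ∈ I, ∀ t₂ ∈ I, ∀ t₃ ∈ I, t₁ < t₂ → t₂ < t₃ →
      ‖γ t₂ - γ t₃‖ < ‖γ t₁ - γ t₃‖ := by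
  intro t₁ ht₁ t₂ ht₂ t₃ ht₃ h12 h23
  have hsub : Icc t₁ t₂ ⊆ I := hI.out ht₁ ht₂
  set g : ℝ → ℝ := fun τ => ‖γ τ - γ t₃‖ with hg
  have hgc : ContinuousOn g (Icc t₁ t₂) :=
    ((hγ.1.mono hsub).sub continuousOn_const).norm
  obtain ⟨m₀, hm₀, hmax₀⟩ := isCompact_Icc.exists_isMaxOn (nonempty_Icc.mpr (le_of_lt h12)) hgc
  set c : ℝ := g m₀ with hc
  set A : Set ℝ := Icc t₁ t₂ ∩ g ⁻¹' (Ici c) with hA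
  have hAne : A.Nonempty := ⟨m₀, hm₀, le_refl c⟩
  have hAbdd : BddAbove A := ⟨t₂, fun x hx => hx.1.2⟩
  have hAclosed : IsClosed A :=
    hgc.preimage_isClosed_of_isClosed isClosed_Icc isClosed_Ici
  set m : ℝ := sSup A with hm
  have hmA : m ∈ A := hAclosed.csSup_mem hAne hAbdd
  have hgm : g m = c := le_antisymm (hmax₀ hmA.1) hmA.2
  -- m must be t₁
  have hmeq : m = t₁ := by
    by_contra hne
    have hmgt : t₁ < m := lt_of_le_of_ne hmA.1.1 (Ne.symm hne)
    have hmI : m ∈ I := hsub hmA.1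
    have hmlt3 : m < t₃ := lt_of_le_of_lt hmA.1.2 h23
    obtain ⟨δ, hδ, hloc⟩ := local_left_increase hγ hmI ht₃ hmlt3
    obtain ⟨s, hs1, hs2⟩ := exists_between (max_lt hmgt (by linarith : m - δ < m))
    have hsIcc : s ∈ Icc t₁ t₂ :=
      ⟨le_of_lt (lt_of_le_of_lt (le_max_left _ _) hs1), le_trans (le_of_lt hs2) hmA.1.2⟩
    have hsI : s ∈ I := hsub hsIcc
    have hgt' : g m < g s := hloc s hsI (lt_of_le_of_lt (le_max_right _ _) hs1) hs2
    rw [hgm] at hgt'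
    exact absurd (hmax₀ hsIcc) (not_le.mpr hgt')
  -- conclude
  have hg1 : g t₁ = c := hmeq ▸ hgm
  have hg2 : g t₂ ≤ c := hmax₀ (right_mem_Icc.mpr (le_of_lt h12))
  have hg2ne : g t₂ ≠ c := by
    intro h
    have : t₂ ∈ A := ⟨right_mem_Icc.mpr (le_of_lt h12), le_of_eq h.symm⟩
    have : t₂ ≤ m := le_csSup hAbdd this
    rw [hmeq] at this
    linarith
  have : g t₂ < g t₁ := hg1 ▸ lt_of_le_of_ne hg2 hg2ne
  exact this
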